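/- Let H be a real Hilbert space, let V ⊆ H be a closed linear subspace with orthogonal projection P : H → V, let L ≥ 0, let N ≥ 1, let ξ_1, …, ξ_N ∈ H and y_1, …, y_N ∈ ℝ, and for x, p ∈ H set Φ_x(p) = ⟨p, x⟩ + min_{1 ≤ n ≤ N} ( y_n − ⟨p, ξ_n⟩ ). Let α ≥ 0 and let x ∈ H be such that dist(x, V) ≤ α and dist(ξ_n, V) ≤ α for every n. Then for every p ∈ H with ‖p‖ ≤ L, the projected point P p satisfies ‖P p‖ ≤ L and | Φ_x(p) − Φ_x(P p) | ≤ 2 L α. Consequently, 0 ≤ sup_{‖p‖ ≤ L} Φ_x(p) − sup_{p ∈ V, ‖p‖ ≤ L} Φ_x(p) ≤ 2 L α. -/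

import Mathlib

open scoped RealInnerProductSpace

lemma aux_abs_ciInf_sub {ι : Type*} [Nonempty ι] [Finite ι] (f g : ι → ℝ) (c : ℝ)
    (h : ∀ i, |f i - g i| ≤ c) : |(⨅ i, f i) - ⨅ i, g i| ≤ c := by
  have bf : BddBelow (Set.range f) := (Set.finite_range f).bddBelow
  have bg : BddBelow (Set.range g) := (Set.finite_range g).bddBelow
  rw [abs_sub_le_iff]
  constructor
  · rw [sub_le_iff_le_add, add_comm, ← sub_le_iff_le_add]
    refine le_ciInf fun i => ?_
    have := (abs_sub_le_iff.mp (h i)).1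
    have h2 : f i - c ≤ g i := by linarith
    exact le_trans (by linarith [ciInf_le bf i]) h2
  · rw [sub_le_iff_le_add, add_comm, ← sub_le_iff_le_add]
    refine le_ciInf fun i => ?_
    have := (abs_sub_le_iff.mp (h i)).2
    have h2 : g i - c ≤ f i := by linarith
    exact le_trans (by linarith [ciInf_le bg i]) h2

/-- projecting the dual variable onto a subspace which
`α`-approximates the point `x` and the sample points changes the dual
objective by at most `2Lα`; consequently the sup over the sub-ball of `V` is
within `2Lα` of the sup over the full ball. -/
theorem dual_objective_projection_estimate
    {H : Type*} [NormedAddCommGroup H] [InnerProductSpace ℝ H] [CompleteSpace H]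
    (V : Submodule ℝ H) [CompleteSpace V]
    (L : ℝ) (hL : 0 ≤ L) (N : ℕ) (hN : 1 ≤ N) (ξ : Fin N → H) (y : Fin N → ℝ)
    (Φ : H → H → ℝ)
    (hΦ : ∀ x q, Φ x q = ⟪q, x⟫ + ⨅ n : Fin N, (y n - ⟪q, ξ n⟫))
    (P : H → H) (hP : ∀ z, P z = (V.orthogonalProjectionOnto z : H))
    (α : ℝ) (hα : 0 ≤ α) (x : H)
    (hx : Metric.infDist x (V : Set H) ≤ α)
    (hξd : ∀ n, Metric.infDist (ξ n) (V : Set H) ≤ α) :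
    (∀ p : H, ‖p‖ ≤ L → ‖P p‖ ≤ L ∧ |Φ x p - Φ x (P p)| ≤ 2 * L * α) ∧
    (0 ≤ (⨆ p : {p : H // ‖p‖ ≤ L}, Φ x p.1)
        - (⨆ p : {p : H // p ∈ V ∧ ‖p‖ ≤ L}, Φ x p.1)) ∧
    ((⨆ p : {p : H // ‖p‖ ≤ L}, Φ x p.1)
        - (⨆ p : {p : H // p ∈ V ∧ ‖p‖ ≤ L}, Φ x p.1) ≤ 2 * L * α) := by
  haveI : Nonempty (Fin N) := ⟨⟨0, hN⟩⟩
  have hproj : ∀ z : H, ‖z - P z‖ = Metric.infDist z (V : Set H) := by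
    intro z
    rw [hP, ← Submodule.starProjection_apply, Submodule.starProjection_minimal, Metric.infDist_eq_iInf]
    simp_rw [dist_eq_norm]; rfl
  have hPmem : ∀ z, P z ∈ V := fun z => by rw [hP]; exact (V.orthogonalProjectionOnto z).2
  have hort : ∀ z, z - P z ∈ Vᗮ := fun z => by
    rw [hP, ← Submodule.starProjection_apply]; exact Submodule.sub_starProjection_mem_orthogonal z
  have hsubnorm : ∀ p : H, ‖p - P p‖ ≤ ‖p‖ := by
    intro p
    rw [hproj p]
    calc Metric.infDist p (V : Set H) ≤ dist p 0 :=
          Metric.infDist_le_dist_of_mem V.zero_mem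
      _ = ‖p‖ := by simp
  have key : ∀ (p w : H), Metric.infDist w (V : Set H) ≤ α →
      |⟪p, w⟫ - ⟪P p, w⟫| ≤ ‖p‖ * α := by
    intro p w hw
    have h0 : ⟪p - P p, P w⟫ = 0 := by
      have := (Submodule.mem_orthogonal V (p - P p)).mp (hort p) (P w) (hPmem w)
      rwa [real_inner_comm] at this
    have h1 : ⟪p, w⟫ - ⟪P p, w⟫ = ⟪p - P p, w - P w⟫ := by
      rw [inner_sub_right, inner_sub_left, h0]; ring
    rw [h1]
    calc |⟪p - P p, w - P w⟫| ≤ ‖p - P p‖ * ‖w - P w‖ := abs_real_inner_le_norm _ _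
      _ ≤ ‖p‖ * α := by
          apply mul_le_mul (hsubnorm p) (by rw [hproj w]; exact hw)
            (norm_nonneg _) (norm_nonneg _)
  have main : ∀ p : H, ‖p‖ ≤ L → ‖P p‖ ≤ L ∧ |Φ x p - Φ x (P p)| ≤ 2 * L * α := by
    intro p hp
    have hPn : ‖P p‖ ≤ L := by
      rw [hP]
      have h1 : ‖(V.orthogonalProjectionOnto p : H)‖ ≤ ‖p‖ := by
        calc ‖(V.orthogonalProjectionOnto p : H)‖ = ‖V.orthogonalProjectionOnto p‖ := rfl
          _ ≤ ‖V.orthogonalProjectionOnto‖ * ‖p‖ := (V.orthogonalProjectionOnto).le_opNorm p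
          _ ≤ 1 * ‖p‖ := mul_le_mul_of_nonneg_right (Submodule.orthogonalProjectionOnto_norm_le V) (norm_nonneg _)
          _ = ‖p‖ := one_mul _
      exact le_trans h1 hp
    refine ⟨hPn, ?_⟩
    have hinf : |(⨅ n : Fin N, (y n - ⟪p, ξ n⟫)) - ⨅ n : Fin N, (y n - ⟪P p, ξ n⟫)|
        ≤ L * α := by
      apply aux_abs_ciInf_sub
      intro n
      have := key p (ξ n) (hξd n)
      have h2 : |(y n - ⟪p, ξ n⟫) - (y n - ⟪P p, ξ n⟫)| = |⟪P p, ξ n⟫ - ⟪p, ξ n⟫| := by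
        ring_nf
      rw [h2, abs_sub_comm]
      exact le_trans this (mul_le_mul_of_nonneg_right hp hα)
    have hlin : |⟪p, x⟫ - ⟪P p, x⟫| ≤ L * α :=
      le_trans (key p x hx) (mul_le_mul_of_nonneg_right hp hα)
    rw [hΦ, hΦ]
    have : (⟪p, x⟫ + ⨅ n : Fin N, (y n - ⟪p, ξ n⟫)) -
        (⟪P p, x⟫ + ⨅ n : Fin N, (y n - ⟪P p, ξ n⟫)) =
        (⟪p, x⟫ - ⟪P p, x⟫) +
        ((⨅ n : Fin N, (y n - ⟪p, ξ n⟫)) - ⨅ n : Fin N, (y n - ⟪P p, ξ n⟫)) := by ring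
    rw [this]
    calc |_ + _| ≤ _ + _ := abs_add_le _ _
      _ ≤ L * α + L * α := add_le_add hlin hinf
      _ = 2 * L * α := by ring
  refine ⟨main, ?_⟩
  -- Boundedness
  set n₀ : Fin N := ⟨0, hN⟩
  set M : ℝ := L * ‖x‖ + (y n₀ + L * ‖ξ n₀‖) with hM
  have hBdd : ∀ q : H, ‖q‖ ≤ L → Φ x q ≤ M := by
    intro q hq
    rw [hΦ]
    have h1 : ⟪q, x⟫ ≤ L * ‖x‖ :=
      le_trans (real_inner_le_norm q x) (mul_le_mul_of_nonneg_right hq (norm_nonneg _))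
    have h2 : (⨅ n : Fin N, (y n - ⟪q, ξ n⟫)) ≤ y n₀ - ⟪q, ξ n₀⟫ :=
      ciInf_le (Set.finite_range _).bddBelow n₀
    have h3 : -⟪q, ξ n₀⟫ ≤ L * ‖ξ n₀‖ := by
      have := abs_real_inner_le_norm q (ξ n₀)
      have h4 : ‖q‖ * ‖ξ n₀‖ ≤ L * ‖ξ n₀‖ :=
        mul_le_mul_of_nonneg_right hq (norm_nonneg _)
      cases abs_le.mp this with
      | intro a b => linarith
    linarith
  haveI : Nonempty {p : H // ‖p‖ ≤ L} := ⟨⟨0, by simpa using hL⟩⟩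
  haveI : Nonempty {p : H // p ∈ V ∧ ‖p‖ ≤ L} := ⟨⟨0, V.zero_mem, by simpa using hL⟩⟩
  have bddA : BddAbove (Set.range fun p : {p : H // ‖p‖ ≤ L} => Φ x p.1) := by
    refine ⟨M, ?_⟩
    rintro _ ⟨p, rfl⟩
    exact hBdd p.1 p.2
  have bddB : BddAbove (Set.range fun p : {p : H // p ∈ V ∧ ‖p‖ ≤ L} => Φ x p.1) := by
    refine ⟨M, ?_⟩
    rintro _ ⟨p, rfl⟩
    exact hBdd p.1 p.2.2
  have hBA : (⨆ p : {p : H // p ∈ V ∧ ‖p‖ ≤ L}, Φ x p.1)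
      ≤ ⨆ p : {p : H // ‖p‖ ≤ L}, Φ x p.1 := by
    refine ciSup_le fun p => ?_
    exact le_ciSup bddA ⟨p.1, p.2.2⟩
  have hAB : (⨆ p : {p : H // ‖p‖ ≤ L}, Φ x p.1)
      ≤ (⨆ p : {p : H // p ∈ V ∧ ‖p‖ ≤ L}, Φ x p.1) + 2 * L * α := by
    refine ciSup_le fun p => ?_
    obtain ⟨hPn, hd⟩ := main p.1 p.2
    have h1 : Φ x p.1 ≤ Φ x (P p.1) + 2 * L * α := by
      have := (abs_sub_le_iff.mp hd).1
      linarith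
    have h2 : Φ x (P p.1) ≤ ⨆ q : {p : H // p ∈ V ∧ ‖p‖ ≤ L}, Φ x q.1 :=
      le_ciSup bddB ⟨P p.1, hPmem p.1, hPn⟩
    linarith
  exact ⟨by linarith, by linarith⟩
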